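/- arXiv:2602.00325 — 3 statements merged into one kernel-verified Lean document; each statement's English description precedes it below -/
import Mathlib

section
/- Let Z = {G^c ξ^c + G^b ξ^b + c : ξ^c ∈ [0,1]^{n_g}, ξ^b ∈ {0,1}^{n_b}, A^c ξ^c + A^b ξ^b = b} ⊆ ℝ^n be a hybrid zonotope (with G^c ∈ ℝ^{n×n_g}, G^b ∈ ℝ^{n×n_b}, c ∈ ℝ^n, A^c ∈ ℝ^{n_c×n_g}, A^b ∈ ℝ^{n_c×n_b}, b ∈ ℝ^{n_c}), let H = {x ∈ ℝ^m : L x ≤ r, A_h x = b_h} be an H-rep polytope (L ∈ ℝ^{n_i×m}, r ∈ ℝ^{n_i}, A_h ∈ ℝ^{n_e×m}, b_h ∈ ℝ^{n_e}), and let R ∈ ℝ^{m×n}. Define s ∈ ℝ^{n_i} by s = r − L R c + Σ_{i=1}^{n_g} |L R g^{c,i}| + Σ_{i=1}^{n_b} |L R g^{b,i}|, where g^{c,i} and g^{b,i} are the i-th columns of G^c and G^b and the absolute values are taken entrywise, and assume s ≥ 0 entrywise. Then the generalized intersection Z ∩_R H = {z ∈ Z : R z ∈ H} equals the hybrid zonotope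 {G^c ξ^c + G^b ξ^b + c : ξ^c ∈ [0,1]^{n_g}, ξ^s ∈ [0,1]^{n_i}, ξ^b ∈ {0,1}^{n_b}, A^c ξ^c + A^b ξ^b = b, L R G^c ξ^c + diag(s) ξ^s + L R G^b ξ^b = r − L R c, A_h R G^c ξ^c + A_h R G^b ξ^b = b_h − A_h R c}. -/
open Finset in
private lemma neg_mulVec_le_sum_abs {k ni : ℕ} (M : Matrix (Fin ni) (Fin k) ℝ)
    (ξ : Fin k → ℝ) (hξ : ∀ j, ξ j ∈ Set.Icc (0:ℝ) 1) (i : Fin ni) :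
    -(M.mulVec ξ i) ≤ ∑ j, |M i j| := by
  rw [Matrix.mulVec, dotProduct, ← Finset.sum_neg_distrib]
  apply Finset.sum_le_sum
  intro j _
  have h := hξ j
  calc -(M i j * ξ j) = (-M i j) * ξ j := by ring
    _ ≤ |M i j| * ξ j := mul_le_mul_of_nonneg_right (neg_le_abs _) h.1
    _ ≤ |M i j| * 1 := mul_le_mul_of_nonneg_left h.2 (abs_nonneg _)
    _ = |M i j| := mul_one _

open Finset in
/-- Generalized intersection of a hybrid zonotope
`Z = {G^c ξ^c + G^b ξ^b + c : ξ^c ∈ [0,1]^{n_g}, ξ^b ∈ {0,1}^{n_b}, A^c ξ^c + A^b ξ^b = b}`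
with an H-rep polytope `H = {x : L x ≤ r, A_h x = b_h}` under a matrix `R`:
with `s = r - L R c + Σᵢ |L R g^{c,i}| + Σᵢ |L R g^{b,i}| ≥ 0` (entrywise),
`Z ∩_R H = {z ∈ Z : R z ∈ H}` is the hybrid zonotope with the added slack
factors `ξ^s ∈ [0,1]^{n_i}` and constraints
`L R G^c ξ^c + diag(s) ξ^s + L R G^b ξ^b = r - L R c` and
`A_h R G^c ξ^c + A_h R G^b ξ^b = b_h - A_h R c`. -/
theorem hybZono_inter_hrep
    (n ng nb nc m ni ne : ℕ)
    (Gc : Matrix (Fin n) (Fin ng) ℝ) (Gb : Matrix (Fin n) (Fin nb) ℝ)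
    (c : Fin n → ℝ)
    (Ac : Matrix (Fin nc) (Fin ng) ℝ) (Ab : Matrix (Fin nc) (Fin nb) ℝ)
    (b : Fin nc → ℝ)
    (L : Matrix (Fin ni) (Fin m) ℝ) (r : Fin ni → ℝ)
    (Ah : Matrix (Fin ne) (Fin m) ℝ) (bh : Fin ne → ℝ)
    (R : Matrix (Fin m) (Fin n) ℝ)
    (Z : Set (Fin n → ℝ))
    (hZ : Z = {x : Fin n → ℝ | ∃ ξc : Fin ng → ℝ, ∃ ξb : Fin nb → ℝ,
      (∀ i, ξc i ∈ Set.Icc (0 : ℝ) 1) ∧ (∀ i, ξb i = 0 ∨ ξb i = 1) ∧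
      Ac.mulVec ξc + Ab.mulVec ξb = b ∧
      x = Gc.mulVec ξc + Gb.mulVec ξb + c})
    (H : Set (Fin m → ℝ))
    (hH : H = {x : Fin m → ℝ | (∀ i, L.mulVec x i ≤ r i) ∧ Ah.mulVec x = bh})
    (s : Fin ni → ℝ)
    (hs : ∀ i, s i = r i - (L * R).mulVec c i
      + ∑ j : Fin ng, |(L * R * Gc) i j| + ∑ j : Fin nb, |(L * R * Gb) i j|)
    (hs_nonneg : ∀ i, 0 ≤ s i) :
    {z ∈ Z | R.mulVec z ∈ H} =
    {x : Fin n → ℝ | ∃ ξc : Fin ng → ℝ, ∃ ξs : Fin ni → ℝ, ∃ ξb : Fin nb → ℝ,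
      (∀ i, ξc i ∈ Set.Icc (0 : ℝ) 1) ∧ (∀ i, ξs i ∈ Set.Icc (0 : ℝ) 1) ∧
      (∀ i, ξb i = 0 ∨ ξb i = 1) ∧
      Ac.mulVec ξc + Ab.mulVec ξb = b ∧
      (L * R * Gc).mulVec ξc + (Matrix.diagonal s).mulVec ξs
        + (L * R * Gb).mulVec ξb = r - (L * R).mulVec c ∧
      (Ah * R * Gc).mulVec ξc + (Ah * R * Gb).mulVec ξb = bh - (Ah * R).mulVec c ∧
      x = Gc.mulVec ξc + Gb.mulVec ξb + c} := by
  subst hZ hH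
  ext x
  simp only [Set.mem_setOf_eq, Set.mem_sep_iff]
  constructor
  · rintro ⟨⟨ξc, ξb, hξc, hξb, hab, rfl⟩, hle, heq⟩
    have hξb' : ∀ j, ξb j ∈ Set.Icc (0:ℝ) 1 := by
      intro j; rcases hξb j with h | h <;> simp [h]
    have hx : ∀ (k : ℕ) (M : Matrix (Fin k) (Fin m) ℝ),
        M.mulVec (R.mulVec (Gc.mulVec ξc + Gb.mulVec ξb + c))
          = (M*R*Gc).mulVec ξc + (M*R*Gb).mulVec ξb + (M*R).mulVec c := by
      intro k M
      rw [Matrix.mulVec_mulVec, Matrix.mulVec_add, Matrix.mulVec_add,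
        Matrix.mulVec_mulVec, Matrix.mulVec_mulVec]
    set num : Fin ni → ℝ := fun i => r i - (L*R).mulVec c i
      - (L*R*Gc).mulVec ξc i - (L*R*Gb).mulVec ξb i with hnumdef
    have hnum0 : ∀ i, 0 ≤ num i := by
      intro i
      have h1 := hle i
      rw [hx ni L] at h1
      simp only [Pi.add_apply] at h1
      simp only [hnumdef]
      linarith
    have hnums : ∀ i, num i ≤ s i := by
      intro i
      have h1 := neg_mulVec_le_sum_abs (L*R*Gc) ξc hξc i
      have h2 := neg_mulVec_le_sum_abs (L*R*Gb) ξb hξb' i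
      rw [hs i]
      simp only [hnumdef]
      linarith
    refine ⟨ξc, fun i => if s i = 0 then 0 else num i / s i, ξb, hξc, ?_, hξb, hab,
      ?_, ?_, rfl⟩
    · intro i
      by_cases h : s i = 0
      · simp [h]
      · have hpos : 0 < s i := lt_of_le_of_ne (hs_nonneg i) (Ne.symm h)
        simp only [h, if_false]
        exact ⟨div_nonneg (hnum0 i) (le_of_lt hpos), (div_le_one hpos).2 (hnums i)⟩
    · funext i
      simp only [Pi.add_apply, Pi.sub_apply, Matrix.mulVec_diagonal]
      have hmul : s i * (if s i = 0 then 0 else num i / s i) = num i := by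
        by_cases h : s i = 0
        · have := hnum0 i
          have := hnums i
          rw [h] at *
          simp [h]
          linarith
        · rw [if_neg h, mul_div_cancel₀ _ h]
      rw [hmul]
      simp only [hnumdef]
      ring
    · have h1 := hx ne Ah
      rw [h1] at heq
      funext i
      have := congrFun heq i
      simp only [Pi.add_apply] at this
      simp only [Pi.sub_apply, Pi.add_apply]
      linarith
  · rintro ⟨ξc, ξs, ξb, hξc, hξs, hξb, hab, hcon1, hcon2, rfl⟩
    have hx : ∀ (k : ℕ) (M : Matrix (Fin k) (Fin m) ℝ),
        M.mulVec (R.mulVec (Gc.mulVec ξc + Gb.mulVec ξb + c))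
          = (M*R*Gc).mulVec ξc + (M*R*Gb).mulVec ξb + (M*R).mulVec c := by
      intro k M
      rw [Matrix.mulVec_mulVec, Matrix.mulVec_add, Matrix.mulVec_add,
        Matrix.mulVec_mulVec, Matrix.mulVec_mulVec]
    refine ⟨⟨ξc, ξb, hξc, hξb, hab, rfl⟩, ?_, ?_⟩
    · intro i
      rw [hx ni L]
      have h1 := congrFun hcon1 i
      simp only [Pi.add_apply, Pi.sub_apply, Matrix.mulVec_diagonal] at h1
      have h2 : 0 ≤ s i * ξs i := mul_nonneg (hs_nonneg i) (hξs i).1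
      simp only [Pi.add_apply]
      linarith
    · rw [hx ne Ah]
      funext i
      have h1 := congrFun hcon2 i
      simp only [Pi.add_apply, Pi.sub_apply] at h1
      simp only [Pi.add_apply]
      linarith
end

section
/- Let k ∈ ℤ and t₁, t₂ ∈ ℤ with t₁ ≤ t₂, and let a, b : ℤ → ℝ be sequences with a(j), b(j) ∈ {0,1} for all j. Then the following are equivalent: (i) there exists t ∈ [k+t₁, k+t₂] (integers) such that b(t) = 1 and a(t') = 1 for all integers t' with k+t₁ ≤ t' < t; (ii) Σ_{j=k+t₁}^{k+t₂} b(j) ≥ 1, and for every integer t with k+t₁ < t ≤ k+t₂ it holds that b(t) ≤ Σ_{j=k+t₁}^{t−1} ( a(j)/(t − t₁ − k) + b(j) ). -/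
open Finset in
/-- Encoding of the MTL "until" operator by `τ` linear inequalities.  With
binary indicator sequences `a, b : ℤ → ℝ` for propositions `φ₁, φ₂`, satisfaction
of `φ₁ U_{[t₁,t₂]} φ₂` at time `k` (statement (i)) is equivalent to the system of
linear inequalities (ii). -/
theorem mtl_until_inequalities (k t₁ t₂ : ℤ) (ht : t₁ ≤ t₂) (a b : ℤ → ℝ)
    (ha : ∀ j, a j = 0 ∨ a j = 1) (hb : ∀ j, b j = 0 ∨ b j = 1) :
    (∃ t : ℤ, k + t₁ ≤ t ∧ t ≤ k + t₂ ∧ b t = 1 ∧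
      ∀ t' : ℤ, k + t₁ ≤ t' → t' < t → a t' = 1) ↔
    (1 ≤ ∑ j ∈ Icc (k + t₁) (k + t₂), b j ∧
      ∀ t : ℤ, k + t₁ < t → t ≤ k + t₂ →
        b t ≤ ∑ j ∈ Icc (k + t₁) (t - 1), (a j / ((t - t₁ - k : ℤ) : ℝ) + b j)) := by
  have hb0 : ∀ j, (0:ℝ) ≤ b j := fun j => by rcases hb j with h | h <;> simp [h]
  have hb1 : ∀ j, b j ≤ 1 := fun j => by rcases hb j with h | h <;> simp [h]
  have ha0 : ∀ j, (0:ℝ) ≤ a j := fun j => by rcases ha j with h | h <;> simp [h]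
  have ha1 : ∀ j, a j ≤ 1 := fun j => by rcases ha j with h | h <;> simp [h]
  constructor
  · rintro ⟨t, ht1, ht2, hbt, hall⟩
    constructor
    · calc (1:ℝ) = b t := hbt.symm
        _ ≤ ∑ j ∈ Icc (k + t₁) (k + t₂), b j :=
          Finset.single_le_sum (fun j _ => hb0 j) (Finset.mem_Icc.mpr ⟨ht1, ht2⟩)
    · intro s hs1 hs2
      have hd : (0:ℤ) < s - t₁ - k := by omega
      have hdR : (0:ℝ) < ((s - t₁ - k : ℤ) : ℝ) := by exact_mod_cast hd
      have hcardR : ((Icc (k + t₁) (s - 1)).card : ℝ) = ((s - t₁ - k : ℤ) : ℝ) := by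
        rw [Int.card_Icc]
        have h1 : (s - 1 + 1 - (k + t₁)) = s - t₁ - k := by ring
        rw [h1]
        exact_mod_cast congrArg (Int.cast : ℤ → ℝ) (Int.toNat_of_nonneg hd.le)
      by_cases hst : s ≤ t
      · have hbound : ∀ j ∈ Icc (k + t₁) (s - 1),
            1 / ((s - t₁ - k : ℤ) : ℝ) ≤ a j / ((s - t₁ - k : ℤ) : ℝ) + b j := by
          intro j hj
          rw [Finset.mem_Icc] at hj
          rw [hall j hj.1 (by omega)]
          have := hb0 j
          linarith
        have hsum := Finset.card_nsmul_le_sum _ _ _ hbound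
        rw [nsmul_eq_mul, hcardR] at hsum
        have hone : ((s - t₁ - k : ℤ) : ℝ) * (1 / ((s - t₁ - k : ℤ) : ℝ)) = 1 :=
          mul_one_div_cancel hdR.ne'
        calc b s ≤ 1 := hb1 s
          _ = ((s - t₁ - k : ℤ) : ℝ) * (1 / ((s - t₁ - k : ℤ) : ℝ)) := hone.symm
          _ ≤ _ := hsum
      · have htmem : t ∈ Icc (k + t₁) (s - 1) := Finset.mem_Icc.mpr ⟨ht1, by omega⟩
        have h1 : b t ≤ ∑ j ∈ Icc (k + t₁) (s - 1), b j :=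
          Finset.single_le_sum (fun j _ => hb0 j) htmem
        have h2 : ∑ j ∈ Icc (k + t₁) (s - 1), b j
            ≤ ∑ j ∈ Icc (k + t₁) (s - 1), (a j / ((s - t₁ - k : ℤ) : ℝ) + b j) := by
          apply Finset.sum_le_sum
          intro j _
          have : 0 ≤ a j / ((s - t₁ - k : ℤ) : ℝ) := div_nonneg (ha0 j) hdR.le
          linarith
        have := hb1 s
        linarith
  · rintro ⟨h1, h2⟩
    have hne : ((Icc (k + t₁) (k + t₂)).filter (fun j => b j = 1)).Nonempty := by
      by_contra hemp
      have hz : ∀ j ∈ Icc (k + t₁) (k + t₂), b j = 0 := by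
        intro j hj
        rcases hb j with h | h
        · exact h
        · exact absurd ⟨j, Finset.mem_filter.mpr ⟨hj, h⟩⟩ hemp
      rw [Finset.sum_eq_zero hz] at h1
      linarith
    set t := ((Icc (k + t₁) (k + t₂)).filter (fun j => b j = 1)).min' hne with htdef
    have htmem := Finset.min'_mem _ hne
    rw [Finset.mem_filter, Finset.mem_Icc] at htmem
    obtain ⟨⟨htl, htr⟩, hbt⟩ := htmem
    have hmin : ∀ j ∈ Icc (k + t₁) (k + t₂), b j = 1 → t ≤ j := by
      intro j hj hbj
      exact Finset.min'_le _ _ (Finset.mem_filter.mpr ⟨hj, hbj⟩)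
    refine ⟨t, htl, htr, hbt, ?_⟩
    intro t' ht'1 ht'2
    by_contra ha'
    have ha0' : a t' = 0 := (ha t').resolve_right ha'
    have hklt : k + t₁ < t := by omega
    have hd : (0:ℤ) < t - t₁ - k := by omega
    have hdR : (0:ℝ) < ((t - t₁ - k : ℤ) : ℝ) := by exact_mod_cast hd
    have hcardR : ((Icc (k + t₁) (t - 1)).card : ℝ) = ((t - t₁ - k : ℤ) : ℝ) := by
      rw [Int.card_Icc]
      have h3 : (t - 1 + 1 - (k + t₁)) = t - t₁ - k := by ring
      rw [h3]
      exact_mod_cast congrArg (Int.cast : ℤ → ℝ) (Int.toNat_of_nonneg hd.le)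
    have hbz : ∀ j ∈ Icc (k + t₁) (t - 1), b j = 0 := by
      intro j hj
      rw [Finset.mem_Icc] at hj
      rcases hb j with h | h
      · exact h
      · have := hmin j (Finset.mem_Icc.mpr ⟨hj.1, by omega⟩) h
        omega
    have ht'mem : t' ∈ Icc (k + t₁) (t - 1) := Finset.mem_Icc.mpr ⟨ht'1, by omega⟩
    have hcardpos : 1 ≤ (Icc (k + t₁) (t - 1)).card := Finset.card_pos.mpr ⟨t', ht'mem⟩
    -- bound on the sum of a
    have hsa : ∑ j ∈ Icc (k + t₁) (t - 1), a j ≤ ((Icc (k + t₁) (t - 1)).card : ℝ) - 1 := by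
      rw [← Finset.add_sum_erase _ _ ht'mem, ha0', zero_add]
      have := Finset.sum_le_card_nsmul ((Icc (k + t₁) (t - 1)).erase t') a 1
        (fun j _ => ha1 j)
      rw [nsmul_eq_mul, mul_one, Finset.card_erase_of_mem ht'mem] at this
      calc _ ≤ (((Icc (k + t₁) (t - 1)).card - 1 : ℕ) : ℝ) := this
        _ = _ := by
          rw [Nat.cast_sub hcardpos]; norm_num
    have hkey := h2 t hklt htr
    rw [hbt] at hkey
    have hsum_eq : ∑ j ∈ Icc (k + t₁) (t - 1), (a j / ((t - t₁ - k : ℤ) : ℝ) + b j)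
        = (∑ j ∈ Icc (k + t₁) (t - 1), a j) / ((t - t₁ - k : ℤ) : ℝ) := by
      rw [Finset.sum_div]
      apply Finset.sum_congr rfl
      intro j hj
      rw [hbz j hj, add_zero]
    rw [hsum_eq] at hkey
    have : (∑ j ∈ Icc (k + t₁) (t - 1), a j) / ((t - t₁ - k : ℤ) : ℝ) < 1 := by
      rw [div_lt_one hdR]
      calc _ ≤ ((Icc (k + t₁) (t - 1)).card : ℝ) - 1 := hsa
        _ < ((t - t₁ - k : ℤ) : ℝ) := by rw [hcardR]; linarith
    linarith
end

section
/- Let τ ≥ 1 be an integer and let a, b : {1, …, τ} → ℝ with a(j), b(j) ∈ {0,1} for all j. Let H_U ⊆ ℝ^{2τ} be the H-rep polytope {v ∈ ℝ^{2τ} : [L₁ L₂] v ≤ (0, …, 0, −1)ᵀ}, where (L₁)_{i,j} = −1/i for 1 ≤ i ≤ τ−1, 1 ≤ j ≤ i and 0 otherwise (last row of L₁ zero), and (L₂)_{i,j} = −1 for 1 ≤ j ≤ i, (L₂)_{i,i+1} = 1 for 1 ≤ i ≤ τ−1, and 0 otherwise (last row of L₂ all −1). Then (a(1), …, a(τ),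 b(1), …, b(τ)) ∈ H_U if and only if there exists t ∈ {1, …, τ} such that b(t) = 1 and a(t') = 1 for all 1 ≤ t' < t. -/
private lemma sum_range_ite_lt (f : ℕ → ℝ) (m n : ℕ) (h : m ≤ n) :
    ∑ k ∈ Finset.range n, (if k < m then f k else 0) = ∑ k ∈ Finset.range m, f k := by
  rw [← Finset.sum_filter]
  congr 1
  ext x
  simp only [Finset.mem_filter, Finset.mem_range]
  omega

private lemma all_one_of_sum_ge (f : ℕ → ℝ) (n : ℕ) (hf : ∀ k, f k = 0 ∨ f k = 1)
    (h : (n : ℝ) ≤ ∑ k ∈ Finset.range n, f k) : ∀ k < n, f k = 1 := by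
  intro k hk
  rcases hf k with h0 | h1
  · exfalso
    have hmem : k ∈ Finset.range n := Finset.mem_range.2 hk
    have hsum : ∑ j ∈ Finset.range n, f j = ∑ j ∈ (Finset.range n).erase k, f j := by
      rw [← Finset.add_sum_erase _ f hmem, h0, zero_add]
    have hle : ∑ j ∈ (Finset.range n).erase k, f j ≤ (((Finset.range n).erase k).card : ℝ) := by
      have := Finset.sum_le_card_nsmul ((Finset.range n).erase k) f 1
        (fun x _ => by rcases hf x with h | h <;> simp [h])
      simpa using this
    have hcard : ((Finset.range n).erase k).card = n - 1 := by
      rw [Finset.card_erase_of_mem hmem, Finset.card_range]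
    rw [hcard] at hle
    have h1n : 1 ≤ n := by omega
    have : ((n - 1 : ℕ) : ℝ) = (n : ℝ) - 1 := by
      push_cast [h1n]; ring
    linarith [hsum ▸ h, this ▸ hle]
  · exact h1

private lemma exists_one_of_sum_ge (f : ℕ → ℝ) (n : ℕ) (hf : ∀ k, f k = 0 ∨ f k = 1)
    (h : (1 : ℝ) ≤ ∑ k ∈ Finset.range n, f k) : ∃ k < n, f k = 1 := by
  by_contra hc
  push_neg at hc
  have : ∑ k ∈ Finset.range n, f k = 0 := by
    apply Finset.sum_eq_zero
    intro x hx
    rcases hf x with h0 | h1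
    · exact h0
    · exact absurd h1 (hc x (Finset.mem_range.1 hx))
  linarith

/-- The H-rep polytope `H_U = {v ∈ ℝ^{2τ} : [L₁ L₂] v ≤ (0, …, 0, -1)ᵀ}` exactly
captures satisfaction of the "until" operator over a window of `τ` steps: for
binary indicator sequences `a, b : Fin τ → ℝ` (0-based indexing of the window
`{1, …, τ}`), the stacked vector `(a, b)` (represented as `Sum.elim a b`) lies
in `H_U` iff there is a step `t` with `b t = 1` and `a t' = 1` for all `t' < t`. -/
theorem until_hrep_feasible_space (τ : ℕ) (hτ : 1 ≤ τ) (a b : Fin τ → ℝ)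
    (ha : ∀ j, a j = 0 ∨ a j = 1) (hb : ∀ j, b j = 0 ∨ b j = 1)
    (L₁ L₂ : Matrix (Fin τ) (Fin τ) ℝ)
    (hL₁ : ∀ i j : Fin τ, L₁ i j =
      if (i : ℕ) < τ - 1 ∧ (j : ℕ) ≤ (i : ℕ) then -1 / ((i : ℕ) + 1 : ℝ) else 0)
    (hL₂ : ∀ i j : Fin τ, L₂ i j =
      if (j : ℕ) ≤ (i : ℕ) then -1 else if (j : ℕ) = (i : ℕ) + 1 then 1 else 0)
    (r : Fin τ → ℝ) (hr : ∀ i : Fin τ, r i = if (i : ℕ) < τ - 1 then 0 else -1)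
    (HU : Set (Fin τ ⊕ Fin τ → ℝ))
    (hHU : HU = {v | ∀ i : Fin τ, (Matrix.fromCols L₁ L₂).mulVec v i ≤ r i}) :
    Sum.elim a b ∈ HU ↔
      ∃ t : Fin τ, b t = 1 ∧ ∀ t' : Fin τ, t' < t → a t' = 1 := by
  subst hHU
  simp only [Set.mem_setOf_eq]
  -- ℕ-indexed versions of a and b
  set a' : ℕ → ℝ := fun k => if h : k < τ then a ⟨k, h⟩ else 0 with ha'def
  set b' : ℕ → ℝ := fun k => if h : k < τ then b ⟨k, h⟩ else 0 with hb'def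
  have ha' : ∀ k, a' k = 0 ∨ a' k = 1 := by
    intro k; by_cases h : k < τ <;> simp [ha'def, h]
    exact ha _
  have hb' : ∀ k, b' k = 0 ∨ b' k = 1 := by
    intro k; by_cases h : k < τ <;> simp [hb'def, h]
    exact hb _
  have ha'nn : ∀ k, (0:ℝ) ≤ a' k := fun k => by rcases ha' k with h | h <;> simp [h]
  have hb'nn : ∀ k, (0:ℝ) ≤ b' k := fun k => by rcases hb' k with h | h <;> simp [h]
  have hSnn : ∀ n, (0:ℝ) ≤ ∑ k ∈ Finset.range n, a' k :=
    fun n => Finset.sum_nonneg fun k _ => ha'nn k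
  have hTnn : ∀ n, (0:ℝ) ≤ ∑ k ∈ Finset.range n, b' k :=
    fun n => Finset.sum_nonneg fun k _ => hb'nn k
  -- key computation of each row of the product
  have hkey : ∀ i : Fin τ, (Matrix.fromCols L₁ L₂).mulVec (Sum.elim a b) i =
      (if (i : ℕ) < τ - 1 then
        (-1 / ((i : ℕ) + 1 : ℝ)) * ∑ k ∈ Finset.range ((i : ℕ) + 1), a' k else 0)
      + (-(∑ k ∈ Finset.range ((i : ℕ) + 1), b' k)
          + (if (i : ℕ) + 1 < τ then b' ((i : ℕ) + 1) else 0)) := by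
    intro i
    rw [Matrix.fromCols_mulVec_sumElim]
    have h1 : L₁.mulVec a i =
        (if (i : ℕ) < τ - 1 then
          (-1 / ((i : ℕ) + 1 : ℝ)) * ∑ k ∈ Finset.range ((i : ℕ) + 1), a' k else 0) := by
      simp only [Matrix.mulVec, dotProduct]
      by_cases hi : (i : ℕ) < τ - 1
      · simp only [hi, if_true]
        have heq : ∀ j : Fin τ, L₁ i j * a j =
            (fun k : ℕ => if k < (i : ℕ) + 1 then (-1 / ((i : ℕ) + 1 : ℝ)) * a' k else 0)
              ((j : ℕ)) := by
          intro j
          rw [hL₁]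
          by_cases hj : (j : ℕ) ≤ (i : ℕ)
          · simp [hi, hj, Nat.lt_succ_iff, ha'def, j.isLt]
          · simp [hj, Nat.lt_succ_iff]
        have step : (∑ j : Fin τ, L₁ i j * a j) =
            ∑ k ∈ Finset.range τ,
              (if k < (i : ℕ) + 1 then (-1 / (((i : ℕ) : ℝ) + 1)) * a' k else 0) :=
          (Finset.sum_congr rfl (fun j _ => heq j)).trans
            (Fin.sum_univ_eq_sum_range
              (fun k => if k < (i : ℕ) + 1 then (-1 / (((i : ℕ) : ℝ) + 1)) * a' k else 0) τ)
        rw [step, sum_range_ite_lt _ _ _ (by omega : (i : ℕ) + 1 ≤ τ), ← Finset.mul_sum]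
      · simp only [hi, if_false]
        apply Finset.sum_eq_zero
        intro j _
        rw [hL₁]
        simp [hi]
    have h2 : L₂.mulVec b i =
        -(∑ k ∈ Finset.range ((i : ℕ) + 1), b' k)
          + (if (i : ℕ) + 1 < τ then b' ((i : ℕ) + 1) else 0) := by
      simp only [Matrix.mulVec, dotProduct]
      have heq : ∀ j : Fin τ, L₂ i j * b j =
          (fun k : ℕ => (if k < (i : ℕ) + 1 then -(b' k) else 0)
            + (if k = (i : ℕ) + 1 then b' k else 0)) ((j : ℕ)) := by
        intro j
        rw [hL₂]
        by_cases hj : (j : ℕ) ≤ (i : ℕ)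
        · have : ¬ ((j : ℕ) = (i : ℕ) + 1) := by omega
          simp [hj, this, Nat.lt_succ_iff, hb'def, j.isLt]
        · by_cases hj2 : (j : ℕ) = (i : ℕ) + 1
          · simp [hj, ← hj2, j.isLt, hb'def]
          · simp [hj, hj2, Nat.lt_succ_iff]
      have step : (∑ j : Fin τ, L₂ i j * b j) =
          ∑ k ∈ Finset.range τ,
            ((if k < (i : ℕ) + 1 then -(b' k) else 0)
              + (if k = (i : ℕ) + 1 then b' k else 0)) :=
        (Finset.sum_congr rfl (fun j _ => heq j)).trans
          (Fin.sum_univ_eq_sum_range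
            (fun k => (if k < (i : ℕ) + 1 then -(b' k) else 0)
              + (if k = (i : ℕ) + 1 then b' k else 0)) τ)
      rw [step, Finset.sum_add_distrib, sum_range_ite_lt _ _ _ (by omega : (i : ℕ) + 1 ≤ τ),
        Finset.sum_ite_eq' (Finset.range τ) ((i : ℕ) + 1) b']
      rw [← Finset.sum_neg_distrib]
      simp [Finset.mem_range]
    rw [Pi.add_apply, h1, h2]
  constructor
  · -- forward direction
    intro h
    -- last row gives sum of b ≥ 1
    have hlastrow := h ⟨τ - 1, by omega⟩
    rw [hkey, hr] at hlastrow
    simp only [Fin.val_mk, lt_irrefl, if_false] at hlastrow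
    have hTτ : (1 : ℝ) ≤ ∑ k ∈ Finset.range τ, b' k := by
      have h1 : τ - 1 + 1 = τ := by omega
      have h2 : ¬ (τ - 1 + 1 < τ) := by omega
      rw [h1] at hlastrow
      rw [if_neg (lt_irrefl τ)] at hlastrow
      linarith
    obtain ⟨k0, hk0τ, hk01⟩ := exists_one_of_sum_ge b' τ hb' hTτ
    -- take the minimal index with b = 1
    have hbk0 : b ⟨k0, hk0τ⟩ = 1 := by
      rw [hb'def] at hk01
      simpa [hk0τ] using hk01
    have hne : (Finset.univ.filter (fun t : Fin τ => b t = 1)).Nonempty :=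
      ⟨⟨k0, hk0τ⟩, by simp [hbk0]⟩
    set t := (Finset.univ.filter (fun t : Fin τ => b t = 1)).min' hne with htdef
    have htb : b t = 1 := by
      have := (Finset.univ.filter (fun t : Fin τ => b t = 1)).min'_mem hne
      simpa using this
    have htmin : ∀ t' : Fin τ, t' < t → b t' = 0 := by
      intro t' ht'
      rcases hb t' with h0 | h1
      · exact h0
      · exfalso
        have : t ≤ t' := Finset.min'_le _ _ (by simp [h1])
        exact absurd ht' (not_lt.2 this)
    refine ⟨t, htb, ?_⟩
    by_cases ht0 : (t : ℕ) = 0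
    · intro t' ht'
      exfalso
      have : (t' : ℕ) < (t : ℕ) := ht'
      omega
    · -- use row (t - 1)
      have htτ : (t : ℕ) < τ := t.isLt
      have hrow := h ⟨(t : ℕ) - 1, by omega⟩
      rw [hkey, hr] at hrow
      have hlt : (t : ℕ) - 1 < τ - 1 := by omega
      have hplus : (t : ℕ) - 1 + 1 = (t : ℕ) := by omega
      simp only [Fin.val_mk, hlt, if_true, hplus, htτ] at hrow
      have hbt' : b' (t : ℕ) = 1 := by
        simp only [hb'def, htτ, dif_pos]
        simpa using htb
      have hT0 : ∑ k ∈ Finset.range (t : ℕ), b' k = 0 := by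
        apply Finset.sum_eq_zero
        intro k hk
        have hkt : k < (t : ℕ) := Finset.mem_range.1 hk
        have hkτ : k < τ := by omega
        have := htmin ⟨k, hkτ⟩ (by simpa [Fin.lt_def] using hkt)
        simpa [hb'def, hkτ] using this
      rw [hT0, hbt'] at hrow
      simp only [neg_zero, zero_add] at hrow
      -- hrow : -1/(t-1+1) * S + (0 + 1) ≤ 0 roughly; extract S ≥ t
      have htpos : (0 : ℝ) < ((t : ℕ) : ℝ) := by
        have : 0 < (t : ℕ) := by omega
        exact_mod_cast this
      have hcast : (((t : ℕ) - 1 : ℕ) : ℝ) + 1 = ((t : ℕ) : ℝ) := by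
        have h1 : 1 ≤ (t : ℕ) := by omega
        push_cast [h1]; ring
      rw [hcast] at hrow
      set S := ∑ k ∈ Finset.range (t : ℕ), a' k with hSdef
      have hSge : ((t : ℕ) : ℝ) ≤ S := by
        have hne0 : ((t : ℕ) : ℝ) ≠ 0 := ne_of_gt htpos
        have hmul : (-1 / ((t : ℕ) : ℝ)) * S * ((t : ℕ) : ℝ) = -S := by
          field_simp
        nlinarith [hrow, htpos]
      have hall := all_one_of_sum_ge a' (t : ℕ) ha' hSge
      intro t' ht'
      have ht'lt : (t' : ℕ) < (t : ℕ) := ht'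
      have := hall (t' : ℕ) ht'lt
      simpa [ha'def, t'.isLt] using this
  · -- backward direction
    rintro ⟨t, htb, hta⟩ i
    rw [hkey, hr]
    have hbt' : b' (t : ℕ) = 1 := by
      simp only [hb'def, t.isLt, dif_pos]
      simpa using htb
    by_cases hi : (i : ℕ) < τ - 1
    · simp only [hi, if_true]
      have hi1 : (i : ℕ) + 1 < τ := by omega
      simp only [hi1, if_true]
      have hcpos : (0 : ℝ) < ((i : ℕ) : ℝ) + 1 := by positivity
      rcases hb' ((i : ℕ) + 1) with h0 | h1
      · rw [h0]
        have h1t : (-1 / (((i : ℕ) : ℝ) + 1)) * ∑ k ∈ Finset.range ((i : ℕ) + 1), a' k ≤ 0 := by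
          apply mul_nonpos_of_nonpos_of_nonneg
          · apply div_nonpos_of_nonpos_of_nonneg <;> linarith
          · exact hSnn _
        linarith [hTnn ((i : ℕ) + 1)]
      · rw [h1]
        by_cases hti : (t : ℕ) ≤ (i : ℕ)
        · -- b t = 1 appears in the sum T (i+1)
          have hTge : (1 : ℝ) ≤ ∑ k ∈ Finset.range ((i : ℕ) + 1), b' k := by
            have := Finset.single_le_sum (f := b') (fun k _ => hb'nn k)
              (Finset.mem_range.2 (by omega : (t : ℕ) < (i : ℕ) + 1))
            linarith [hbt' ▸ this]
          have h1t : (-1 / (((i : ℕ) : ℝ) + 1)) * ∑ k ∈ Finset.range ((i : ℕ) + 1), a' k ≤ 0 := by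
            apply mul_nonpos_of_nonpos_of_nonneg
            · apply div_nonpos_of_nonpos_of_nonneg <;> linarith
            · exact hSnn _
          linarith
        · -- all a k = 1 for k ≤ i
          have hone : ∀ k ∈ Finset.range ((i : ℕ) + 1), a' k = 1 := by
            intro k hk
            have hki : k < (i : ℕ) + 1 := Finset.mem_range.1 hk
            have hkτ : k < τ := by omega
            have hklt : (⟨k, hkτ⟩ : Fin τ) < t := by
              rw [Fin.lt_def]
              simp only [Fin.val_mk]
              omega
            have := hta ⟨k, hkτ⟩ hklt
            simp [ha'def, hkτ, this]
          have hS : ∑ k ∈ Finset.range ((i : ℕ) + 1), a' k = ((i : ℕ) : ℝ) + 1 := by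
            rw [Finset.sum_congr rfl hone, Finset.sum_const, Finset.card_range,
              nsmul_eq_mul]
            push_cast
            ring
          rw [hS]
          have : (-1 / (((i : ℕ) : ℝ) + 1)) * (((i : ℕ) : ℝ) + 1) = -1 := by
            field_simp
          rw [this]
          linarith [hTnn ((i : ℕ) + 1)]
    · simp only [hi, if_false]
      have hiτ : (i : ℕ) = τ - 1 := by have := i.isLt; omega
      have h2 : ¬ ((i : ℕ) + 1 < τ) := by omega
      simp only [h2, if_false, add_zero, zero_add]
      have hi1 : (i : ℕ) + 1 = τ := by omega
      rw [hi1]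
      have hTge : (1 : ℝ) ≤ ∑ k ∈ Finset.range τ, b' k := by
        have := Finset.single_le_sum (f := b') (fun k _ => hb'nn k)
          (Finset.mem_range.2 t.isLt)
        linarith [hbt' ▸ this]
      linarith
end
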